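/- Given the velocity update v^{n+1} = v^n + Δt (q/m)(E + v^{n+1/2} × B + F) with v^{n+1/2} = (v^n + v^{n+1})/2, if F · v^{n+1/2} = 0, then the kinetic energy change satisfies (m/2)(‖v^{n+1}‖² - ‖v^n‖²) = q Δt (v^{n+1/2} · E). In particular, if also E · v^{n+1/2} = 0, kinetic energy is exactly conserved. -/

import Mathlib

open Real Filter

noncomputable def cross (a b : EuclideanSpace ℝ (Fin 3)) : EuclideanSpace ℝ (Fin 3) :=
  WithLp.toLp 2 ![a 1 * b 2 - a 2 * b 1, a 2 * b 0 - a 0 * b 2, a 0 * b 1 - a 1 * b 0]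

lemma inner_cross_self (a b : EuclideanSpace ℝ (Fin 3)) :
    (inner ℝ (cross a b) a : ℝ) = 0 := by
  simp only [EuclideanSpace.inner_eq_star_dotProduct]
  simp [dotProduct, Fin.sum_univ_three, cross]
  ring

/-- Energy theorem for the implicit midpoint update with an added effective
force doing no work: the kinetic-energy change equals qΔt v^{n+1/2}·E, and if
moreover E·v^{n+1/2} = 0 the kinetic energy is exactly conserved. -/
theorem stmt_11 (Efld B F v0 v1 vh : EuclideanSpace ℝ (Fin 3))
    (q m Δt : ℝ) (hm : m ≠ 0)
    (hupd : v1 = v0 + (Δt * (q / m)) • (Efld + cross vh B + F))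
    (hhalf : vh = (1 / 2 : ℝ) • (v0 + v1))
    (hF : (inner ℝ F vh : ℝ) = 0) :
    m / 2 * (‖v1‖ ^ 2 - ‖v0‖ ^ 2) = q * Δt * (inner ℝ vh Efld : ℝ) ∧
    ((inner ℝ Efld vh : ℝ) = 0 → m / 2 * ‖v1‖ ^ 2 = m / 2 * ‖v0‖ ^ 2) := by
  have hdiff : v1 - v0 = (Δt * (q / m)) • (Efld + cross vh B + F) := by
    rw [hupd]; abel
  have hsum : v0 + v1 = (2 : ℝ) • vh := by
    rw [hhalf]; rw [smul_smul]; norm_num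
  have hkey : ‖v1‖ ^ 2 - ‖v0‖ ^ 2 =
      (inner ℝ (v1 - v0) (v0 + v1) : ℝ) := by
    rw [inner_sub_left, inner_add_right, inner_add_right, real_inner_self_eq_norm_sq,
      real_inner_self_eq_norm_sq, real_inner_comm v1 v0]
    ring
  have hval : (inner ℝ (v1 - v0) (v0 + v1) : ℝ)
      = (Δt * (q / m)) * (2 * (inner ℝ Efld vh : ℝ)) := by
    rw [hdiff, hsum, inner_smul_left, inner_smul_right, inner_add_left, inner_add_left,
      inner_cross_self, hF]
    simp only [starRingEnd_apply, star_trivial]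
    ring
  have hmain : m / 2 * (‖v1‖ ^ 2 - ‖v0‖ ^ 2) = q * Δt * (inner ℝ vh Efld : ℝ) := by
    rw [hkey, hval, real_inner_comm Efld vh]
    field_simp
  refine ⟨hmain, fun hE => ?_⟩
  have : (inner ℝ vh Efld : ℝ) = 0 := by rw [real_inner_comm]; exact hE
  have := hmain
  rw [‹(inner ℝ vh Efld : ℝ) = 0›] at this
  linarith
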